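/- Let D_T be a real n × p matrix, T a real p × (m − p) matrix, and let D = [D_T | D_T·T] be the n × m block matrix. Let R = [1 | T] be the p × m matrix whose first p columns form the identity. Then for every m × m real matrix W, the identity D_Tᵀ ⬝ D ⬝ W ⬝ Dᵀ = (D_Tᵀ ⬝ D_T) ⬝ R ⬝ W ⬝ Rᵀ ⬝ D_Tᵀ holds. Consequently, if x : ℝ → (Fin n → ℝ) is differentiable with x'(t) = −k • (D ⬝ W(t) ⬝ Dᵀ).mulVec(x t), then the spanning-tree edge state x_T(t) = D_Tᵀ.mulVec(x t) satisfies x_T'(t) = −k • ((D_Tᵀ ⬝ D_T) ⬝ R ⬝ W(t) ⬝ Rᵀ).mulVec(x_T t). -/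

import Mathlib

open Matrix

/-- The identity `D_Tᵀ D W Dᵀ = (D_Tᵀ D_T) R W Rᵀ D_Tᵀ` for `D = [D_T | D_T T]` and
`R = [1 | T]`, and the resulting spanning-tree edge dynamics. -/
theorem stmt11 (n p q : ℕ)
    (DT : Matrix (Fin n) (Fin p) ℝ)
    (T : Matrix (Fin p) (Fin q) ℝ)
    (D : Matrix (Fin n) (Fin p ⊕ Fin q) ℝ)
    (hD : D = Matrix.fromCols DT (DT * T))
    (R : Matrix (Fin p) (Fin p ⊕ Fin q) ℝ) (hR : R = Matrix.fromCols 1 T) :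
    (∀ W : Matrix (Fin p ⊕ Fin q) (Fin p ⊕ Fin q) ℝ,
      DTᵀ * D * W * Dᵀ = (DTᵀ * DT) * R * W * Rᵀ * DTᵀ) ∧
    ∀ (W : ℝ → Matrix (Fin p ⊕ Fin q) (Fin p ⊕ Fin q) ℝ) (k : ℝ) (x : ℝ → Fin n → ℝ),
      (∀ t : ℝ, HasDerivAt x ((-k) • (D * W t * Dᵀ).mulVec (x t)) t) →
      ∀ t : ℝ,
        HasDerivAt (fun s => DTᵀ.mulVec (x s))
          ((-k) • ((DTᵀ * DT) * R * W t * Rᵀ).mulVec (DTᵀ.mulVec (x t))) t := by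
  have hDR : D = DT * R := by
    subst hD hR
    rw [Matrix.mul_fromCols, Matrix.mul_one]
  have key : ∀ W : Matrix (Fin p ⊕ Fin q) (Fin p ⊕ Fin q) ℝ,
      DTᵀ * D * W * Dᵀ = (DTᵀ * DT) * R * W * Rᵀ * DTᵀ := by
    intro W
    rw [hDR, Matrix.transpose_mul]
    simp only [Matrix.mul_assoc]
  refine ⟨key, ?_⟩
  intro W k x hx t
  have h := ((Matrix.mulVecLin DTᵀ).toContinuousLinearMap.hasFDerivAt).comp_hasDerivAt t (hx t)
  refine HasDerivAt.congr_deriv h ?_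
  simp only [LinearMap.coe_toContinuousLinearMap', Matrix.mulVecLin_apply,
    Matrix.mulVec_smul, Matrix.mulVec_mulVec]
  rw [← key]; simp only [Matrix.mul_assoc]
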